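/- Let f be a transcendental entire function, let R > 0 be such that M(r, f) > r for all r ≥ R, and let L ∈ ℤ. If G is a bounded connected component of the complement of A_R^L(f), then ∂G ⊆ A_R^L(f), and for each n ∈ ℕ the image f^n(G) is a bounded connected component of the complement of A_R^{n+L}(f). -/

import Mathlib

open Set Metric Topology Function Bornology

/-- The maximum modulus `M(r, f)` of `f` on the circle `|z| = r`. -/
noncomputable def maxMod (f : ℂ → ℂ) (r : ℝ) : ℝ :=
  sSup ((fun z => ‖f z‖) '' Metric.sphere (0 : ℂ) r)

/-- `f` is a transcendental entire function: holomorphic on all of `ℂ` and not a polynomial. -/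
def TranscEntire (f : ℂ → ℂ) : Prop :=
  Differentiable ℂ f ∧ ¬ ∃ p : Polynomial ℂ, ∀ z, f z = p.eval z

/-- The fast escaping set `A(f)` (with parameter `R`). -/
def fastEscaping (f : ℂ → ℂ) (R : ℝ) : Set ℂ :=
  {z | ∃ L : ℕ, ∀ n : ℕ, (maxMod f)^[n] R ≤ ‖f^[n + L] z‖}

/-- The `L`-th level `A_R^L(f)` of the fast escaping set. -/
def levelSet (f : ℂ → ℂ) (R : ℝ) (L : ℤ) : Set ℂ :=
  {z | ∀ n : ℕ, 0 ≤ (n : ℤ) + L →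
    (maxMod f)^[((n : ℤ) + L).toNat] R ≤ ‖f^[n] z‖}

/-- `E ⊆ ℂ` is an (infinite) spider's web. -/
def SpidersWeb (E : Set ℂ) : Prop :=
  IsConnected E ∧ ∃ G : ℕ → Set ℂ,
    (∀ n, IsOpen (G n) ∧ IsConnected (G n) ∧ Bornology.IsBounded (G n) ∧
      SimplyConnectedSpace (G n) ∧ G n ⊆ G (n + 1) ∧ frontier (G n) ⊆ E) ∧
    (⋃ n, G n) = Set.univ

/-- `K` is a connected component of the set `S`. -/
def IsCompOf {X : Type*} [TopologicalSpace X] (K S : Set X) : Prop :=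
  ∃ z ∈ S, K = connectedComponentIn S z

/-- The `n`-th fundamental hole for `A_R(f)`: the component of the complement of
`A_R^n(f)` containing `0`. -/
noncomputable def fundHole (f : ℂ → ℂ) (R : ℝ) (n : ℤ) : Set ℂ :=
  connectedComponentIn (levelSet f R n)ᶜ 0

/-- The `n`-th fundamental loop for `A_R(f)`. -/
noncomputable def fundLoop (f : ℂ → ℂ) (R : ℝ) (n : ℤ) : Set ℂ :=
  frontier (fundHole f R n)

namespace Stmt13Aux

variable {f : ℂ → ℂ}

lemma not_const (hf : TranscEntire f) (c : ℂ) : ¬ ∀ z, f z = c := by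
  intro h
  exact hf.2 ⟨Polynomial.C c, fun z => by simp [h z]⟩

lemma bddAbove_img (hc : Continuous f) (r : ℝ) :
    BddAbove ((fun z => ‖f z‖) '' Metric.sphere (0 : ℂ) r) :=
  ((isCompact_sphere _ _).image (continuous_norm.comp hc)).bddAbove

lemma abs_le_maxMod (hc : Continuous f) (z : ℂ) :
    ‖f z‖ ≤ maxMod f ‖z‖ := by
  have hz : z ∈ Metric.sphere (0 : ℂ) ‖z‖ := by
    simp [Complex.dist_eq]
  exact le_csSup (bddAbove_img hc _) ⟨z, hz, rfl⟩

lemma maxMod_lt (hf : TranscEntire f) {r s : ℝ} (hr : 0 ≤ r) (hrs : r < s) :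
    maxMod f r < maxMod f s := by
  have hc : Continuous f := hf.1.continuous
  have hs0 : 0 < s := lt_of_le_of_lt hr hrs
  have hbd : ∀ z ∈ closure (Metric.ball (0 : ℂ) s), ‖f z‖ ≤ maxMod f s := by
    intro z hz
    have h0 : ∀ w ∈ frontier (Metric.ball (0 : ℂ) s), ‖f w‖ ≤ maxMod f s := by
      intro w hw
      rw [frontier_ball _ hs0.ne'] at hw
      exact le_csSup (bddAbove_img hc s) ⟨w, hw, rfl⟩
    have := Complex.norm_le_of_forall_mem_frontier_norm_le isBounded_ball
      hf.1.diffContOnCl h0 hz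
    simpa using this
  obtain ⟨x, hx, hmax⟩ := (isCompact_sphere (0 : ℂ) r).exists_isMaxOn
    (NormedSpace.sphere_nonempty.mpr hr)
    ((continuous_norm.comp hc).continuousOn)
  have hMr : maxMod f r = ‖f x‖ := by
    refine le_antisymm (csSup_le ⟨_, ⟨x, hx, rfl⟩⟩ ?_)
      (le_csSup (bddAbove_img hc r) ⟨x, hx, rfl⟩)
    rintro y ⟨w, hw, rfl⟩
    exact hmax hw
  have hxball : x ∈ Metric.ball (0 : ℂ) s := by
    have hdx : dist x 0 = r := hx
    simp [Metric.mem_ball, hdx, hrs]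
  by_contra hle
  push_neg at hle
  have hmaxball : IsMaxOn (norm ∘ f) (Metric.ball (0 : ℂ) s) x := by
    intro w hw
    have h1 : ‖f w‖ ≤ maxMod f s := hbd w (subset_closure hw)
    have : ‖f w‖ ≤ ‖f x‖ := le_trans h1 (hle.trans_eq hMr)
    simpa using this
  have heq := Complex.eqOn_of_isPreconnected_of_isMaxOn_norm
    (convex_ball (0 : ℂ) s).isPreconnected Metric.isOpen_ball
    hf.1.differentiableOn hxball hmaxball
  have hA : AnalyticOnNhd ℂ f univ := Complex.analyticOnNhd_univ_iff_differentiable.mpr hf.1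
  have hall : ∀ z, f z = f x := by
    have hev : f =ᶠ[nhds (0 : ℂ)] (fun _ => f x) := by
      filter_upwards [Metric.ball_mem_nhds (0 : ℂ) hs0] with w hw
      exact heq hw
    have := hA.eqOn_of_preconnected_of_eventuallyEq analyticOnNhd_const
      isPreconnected_univ (mem_univ (0 : ℂ)) hev
    exact fun z => this (mem_univ z)
  exact not_const hf (f x) hall

lemma isClosed_levelSet (hc : Continuous f) (R : ℝ) (L : ℤ) :
    IsClosed (levelSet f R L) := by
  have he : levelSet f R L = ⋂ n : ℕ, {z : ℂ | 0 ≤ (n : ℤ) + L →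
      (maxMod f)^[((n : ℤ) + L).toNat] R ≤ ‖f^[n] z‖} := by
    ext z; simp [levelSet]
  rw [he]
  refine isClosed_iInter fun n => ?_
  by_cases h : 0 ≤ (n : ℤ) + L
  · have : {z : ℂ | 0 ≤ (n : ℤ) + L →
        (maxMod f)^[((n : ℤ) + L).toNat] R ≤ ‖f^[n] z‖} =
        {z : ℂ | (maxMod f)^[((n : ℤ) + L).toNat] R ≤ ‖f^[n] z‖} := by
      ext z; simp [h]
    rw [this]
    exact isClosed_le continuous_const (continuous_norm.comp (hc.iterate n))
  · have : {z : ℂ | 0 ≤ (n : ℤ) + L →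
        (maxMod f)^[((n : ℤ) + L).toNat] R ≤ ‖f^[n] z‖} = univ := by
      ext z; simp [h]
    rw [this]; exact isClosed_univ

lemma levelSet_preimage (hf : TranscEntire f) (R : ℝ) (L : ℤ) :
    levelSet f R L = f ⁻¹' levelSet f R (L + 1) := by
  have hc : Continuous f := hf.1.continuous
  ext z
  constructor
  · intro hz n hn
    have h1 : (0 : ℤ) ≤ ((n + 1 : ℕ) : ℤ) + L := by push_cast; omega
    have h2 := hz (n + 1) h1
    rw [iterate_succ_apply] at h2
    have e : (((n + 1 : ℕ) : ℤ) + L).toNat = ((n : ℤ) + (L + 1)).toNat := by omega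
    rwa [e] at h2
  · intro hz n hn
    match n with
    | 0 =>
      simp only [iterate_zero, id_eq]
      by_contra hlt
      push_neg at hlt
      have hL : 0 ≤ L := by omega
      have h2 := hz 0 (by omega)
      simp only [iterate_zero, id_eq] at h2
      have e : ((0 : ℕ) : ℤ) + (L + 1) = ((0 : ℕ) : ℤ) + L + 1 := by ring
      have e2 : (((0 : ℕ) : ℤ) + (L + 1)).toNat = (((0 : ℕ) : ℤ) + L).toNat + 1 := by omega
      rw [e2, iterate_succ_apply'] at h2
      have h3 : ‖f z‖ ≤ maxMod f ‖z‖ := abs_le_maxMod hc z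
      have h4 : maxMod f ‖z‖ <
          maxMod f ((maxMod f)^[(((0 : ℕ) : ℤ) + L).toNat] R) :=
        maxMod_lt hf (norm_nonneg z) hlt
      linarith
    | Nat.succ m =>
      have h1 : (0 : ℤ) ≤ (m : ℤ) + (L + 1) := by push_cast at hn ⊢; omega
      have h2 := hz m h1
      rw [iterate_succ_apply]
      have e : (((m + 1 : ℕ) : ℤ) + L).toNat = ((m : ℤ) + (L + 1)).toNat := by omega
      rwa [e]

lemma frontier_cc_subset {U : Set ℂ} (hU : IsOpen U) (z : ℂ) :
    frontier (connectedComponentIn U z) ⊆ Uᶜ := by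
  intro w hw
  by_contra hwU
  rw [Set.mem_compl_iff, not_not] at hwU
  have hGopen : IsOpen (connectedComponentIn U z) := hU.connectedComponentIn
  rw [hGopen.frontier_eq] at hw
  obtain ⟨hwcl, hwG⟩ := hw
  have hzU : z ∈ U := by
    by_contra hz
    rw [connectedComponentIn_eq_empty hz, closure_empty] at hwcl
    exact hwcl
  have hNopen : IsOpen (connectedComponentIn U w) := hU.connectedComponentIn
  have hwN : w ∈ connectedComponentIn U w := mem_connectedComponentIn hwU
  obtain ⟨y, hyN, hyG⟩ := mem_closure_iff.mp hwcl _ hNopen hwN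
  have hconn : IsPreconnected (connectedComponentIn U w ∪ connectedComponentIn U z) :=
    IsPreconnected.union y hyN hyG isPreconnected_connectedComponentIn
      isPreconnected_connectedComponentIn
  have hsub : connectedComponentIn U w ∪ connectedComponentIn U z ⊆
      connectedComponentIn U z :=
    hconn.subset_connectedComponentIn (Or.inr (mem_connectedComponentIn hzU))
      (union_subset (connectedComponentIn_subset _ _) (connectedComponentIn_subset _ _))
  exact hwG (hsub (Or.inl hwN))

lemma isCompOf_of_clopen {V C : Set ℂ} (hV : IsOpen V) (hCV : C ⊆ V) (hCo : IsOpen C)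
    (hCc : closure C ∩ V ⊆ C) (hCconn : IsConnected C) : IsCompOf C V := by
  obtain ⟨z, hz⟩ := hCconn.nonempty
  refine ⟨z, hCV hz, ?_⟩
  have hsub : C ⊆ connectedComponentIn V z :=
    hCconn.isPreconnected.subset_connectedComponentIn hz hCV
  refine Subset.antisymm hsub ?_
  have hcover : connectedComponentIn V z ⊆ C ∪ (V \ closure C) := by
    intro w hw
    have hwV : w ∈ V := connectedComponentIn_subset _ _ hw
    by_cases h : w ∈ closure C
    · exact Or.inl (hCc ⟨h, hwV⟩)
    · exact Or.inr ⟨hwV, h⟩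
  have hdisj : Disjoint C (V \ closure C) := by
    rw [Set.disjoint_left]
    rintro w hwC ⟨-, hn⟩
    exact hn (subset_closure hwC)
  exact isPreconnected_connectedComponentIn.subset_left_of_subset_union hCo
    (hV.sdiff isClosed_closure) hdisj hcover
    ⟨z, mem_connectedComponentIn (hCV hz), hz⟩

lemma step (hf : TranscEntire f) {R : ℝ} (L : ℤ) {G : Set ℂ}
    (hG : IsCompOf G (levelSet f R L)ᶜ) (hbdd : IsBounded G) :
    IsCompOf (f '' G) (levelSet f R (L + 1))ᶜ ∧ IsBounded (f '' G) := by
  have hc : Continuous f := hf.1.continuous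
  obtain ⟨z, hzU, hGeq⟩ := hG
  have hUopen : IsOpen (levelSet f R L)ᶜ := (isClosed_levelSet hc R L).isOpen_compl
  have hVopen : IsOpen (levelSet f R (L + 1))ᶜ :=
    (isClosed_levelSet hc R (L + 1)).isOpen_compl
  have hUV : (levelSet f R L)ᶜ = f ⁻¹' (levelSet f R (L + 1))ᶜ := by
    rw [levelSet_preimage hf R L, Set.preimage_compl]
  have hGopen : IsOpen G := by rw [hGeq]; exact hUopen.connectedComponentIn
  have hGconn : IsConnected G := by
    rw [hGeq]; exact isConnected_connectedComponentIn_iff.mpr hzU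
  have hGU : G ⊆ (levelSet f R L)ᶜ := by
    rw [hGeq]; exact connectedComponentIn_subset _ _
  have hclG : IsCompact (closure G) := hbdd.isCompact_closure
  have himg_cpt : IsCompact (f '' closure G) := hclG.image hc
  have hbdd' : IsBounded (f '' G) :=
    himg_cpt.isBounded.subset (image_mono subset_closure)
  have hA : AnalyticOnNhd ℂ f univ := Complex.analyticOnNhd_univ_iff_differentiable.mpr hf.1
  have hopen_img : IsOpen (f '' G) := by
    rcases hA.is_constant_or_isOpen isPreconnected_univ with ⟨w, hw⟩ | hop
    · exact absurd (fun u => hw u (mem_univ u)) (not_const hf w)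
    · exact hop G (subset_univ G) hGopen
  have hGV : f '' G ⊆ (levelSet f R (L + 1))ᶜ := by
    rw [hUV] at hGU
    rintro w ⟨u, hu, rfl⟩
    have hGUu := hGU hu
    exact hGUu
  have hfr : frontier G ⊆ levelSet f R L := by
    rw [hGeq]
    intro w hw
    have := frontier_cc_subset hUopen z hw
    rwa [compl_compl] at this
  have hrc : closure (f '' G) ∩ (levelSet f R (L + 1))ᶜ ⊆ f '' G := by
    rintro w ⟨hwcl, hwV⟩
    have hcl_sub : closure (f '' G) ⊆ f '' closure G :=
      closure_minimal (image_mono subset_closure) himg_cpt.isClosed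
    obtain ⟨u, hu, rfl⟩ := hcl_sub hwcl
    by_cases huG : u ∈ G
    · exact ⟨u, huG, rfl⟩
    · have hufr : u ∈ frontier G := by
        rw [hGopen.frontier_eq]
        exact ⟨hu, huG⟩
      have hul : u ∈ levelSet f R L := hfr hufr
      rw [levelSet_preimage hf R L] at hul
      exact absurd hul hwV
  exact ⟨isCompOf_of_clopen hVopen hGV hopen_img hrc
    (hGconn.image f hc.continuousOn), hbdd'⟩

end Stmt13Aux

/-- boundaries and images of bounded components of `A_R^L(f)ᶜ`. -/
theorem stmt_13 (f : ℂ → ℂ) (R : ℝ) (hf : TranscEntire f) (hR : 0 < R)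
    (hM : ∀ r ≥ R, r < maxMod f r) (L : ℤ) (G : Set ℂ)
    (hG : IsCompOf G (levelSet f R L)ᶜ) (hbdd : Bornology.IsBounded G) :
    frontier G ⊆ levelSet f R L ∧
    ∀ n : ℕ, IsCompOf (f^[n] '' G) (levelSet f R ((n : ℤ) + L))ᶜ ∧
      Bornology.IsBounded (f^[n] '' G) := by
  have hc : Continuous f := hf.1.continuous
  obtain ⟨z, hzU, hGeq⟩ := hG
  constructor
  · intro w hw
    rw [hGeq] at hw
    have := Stmt13Aux.frontier_cc_subset
      ((Stmt13Aux.isClosed_levelSet hc R L).isOpen_compl) z hw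
    rwa [compl_compl] at this
  · intro n
    induction n with
    | zero =>
      have e : ((0 : ℕ) : ℤ) + L = L := by simp
      rw [e]
      simp only [Function.iterate_zero, Set.image_id]
      exact ⟨⟨z, hzU, hGeq⟩, hbdd⟩
    | succ n ih =>
      have hstep := Stmt13Aux.step hf ((n : ℤ) + L) ih.1 ih.2
      have e1 : f^[n + 1] '' G = f '' (f^[n] '' G) := by
        rw [Function.iterate_succ', Set.image_comp]
      have e2 : ((n + 1 : ℕ) : ℤ) + L = ((n : ℤ) + L) + 1 := by push_cast; ring
      rw [e1, e2]
      exact hstep
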